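/- Let f be holomorphic near 0 ∈ ℂ with f(0) = 0 and multiplier λ = f'(0) with |λ| = 1. If 0 is stable for f (i.e. there is a neighbourhood of 0 on which all iterates of f are defined and uniformly bounded), then f is holomorphically linearizable: there is a local biholomorphism φ fixing 0 with φ ∘ f ∘ φ⁻¹ (z) = λz. -/

import Mathlib

open Metric Filter

/-- an elliptic/indifferent fixed point which is stable is
holomorphically linearizable: if `f` is holomorphic on a disk around `0`, `f 0 = 0`,
`|f'(0)| = 1`, and there is a smaller disk whose orbits all stay in the domain,
then there is a local biholomorphism `φ` fixing `0` with `φ ∘ f = λ • φ` near `0`. -/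
theorem stable_implies_linearizable (f : ℂ → ℂ) (lam : ℂ) (r : ℝ) (hr : 0 < r)
    (hf : AnalyticOnNhd ℂ f (ball (0 : ℂ) r))
    (hf0 : f 0 = 0) (hder : deriv f 0 = lam) (hlam : ‖lam‖ = 1)
    (hstable : ∃ ε > (0 : ℝ), ε ≤ r ∧
      ∀ z ∈ ball (0 : ℂ) ε, ∀ k : ℕ, f^[k] z ∈ ball (0 : ℂ) r) :
    ∃ φ : ℂ → ℂ, AnalyticAt ℂ φ 0 ∧ φ 0 = 0 ∧ deriv φ 0 ≠ 0 ∧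
      ∀ᶠ z in nhds (0 : ℂ), φ (f z) = lam * φ z := by
  obtain ⟨ε, hε, hεr, horb⟩ := hstable
  have hlam0 : lam ≠ 0 := fun h => by simp [h] at hlam
  have hε2 : (0:ℝ) < ε / 2 := by positivity
  have hε2ε : ε / 2 < ε := by linarith
  have h0ε : (0:ℂ) ∈ ball (0:ℂ) ε := by simp [hε]
  have h0r : (0:ℂ) ∈ ball (0:ℂ) r := by simp [hr]
  have hfix : ∀ j : ℕ, f^[j] 0 = 0 := fun j => Function.iterate_fixed hf0 j
  -- iterates are analytic on ball ε
  have hiter : ∀ k : ℕ, ∀ z ∈ ball (0:ℂ) ε, AnalyticAt ℂ (f^[k]) z := by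
    intro k
    induction k with
    | zero => intro z _; simpa using (analyticAt_id : AnalyticAt ℂ id z)
    | succ k ih =>
      intro z hz
      rw [Function.iterate_succ']
      exact (hf _ (horb z hz k)).comp (ih z hz)
  set S : ℕ → ℂ → ℂ := fun k z => ∑ j ∈ Finset.range k, (lam ^ j)⁻¹ * f^[j] z with hSdef
  set Φ : ℕ → ℂ → ℂ := fun k z => (k : ℂ)⁻¹ * S k z with hΦdef
  have hΦa : ∀ k : ℕ, ∀ z ∈ ball (0:ℂ) ε, AnalyticAt ℂ (Φ k) z := by
    intro k z hz
    apply AnalyticAt.mul analyticAt_const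
    exact Finset.analyticAt_fun_sum _ fun j _ => analyticAt_const.mul (hiter j z hz)
  -- uniform bound on Φ k
  have hΦbound : ∀ k : ℕ, ∀ z ∈ ball (0:ℂ) ε, ‖Φ k z‖ ≤ r := by
    intro k z hz
    have hterm : ∀ j : ℕ, ‖(lam ^ j)⁻¹ * f^[j] z‖ ≤ r := by
      intro j
      rw [norm_mul, norm_inv, norm_pow, hlam, one_pow, inv_one, one_mul]
      exact le_of_lt (by simpa [mem_ball, dist_zero_right] using horb z hz j)
    have hSb : ‖S k z‖ ≤ k * r := by
      calc ‖S k z‖ ≤ ∑ j ∈ Finset.range k, ‖(lam ^ j)⁻¹ * f^[j] z‖ := norm_sum_le _ _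
        _ ≤ ∑ _j ∈ Finset.range k, r := Finset.sum_le_sum fun j _ => hterm j
        _ = k * r := by simp [mul_comm]
    rcases Nat.eq_zero_or_pos k with hk | hk
    · simp [hΦdef, hk]; positivity
    · have hk' : (0:ℝ) < k := by exact_mod_cast hk
      calc ‖Φ k z‖ = ‖((k:ℂ))⁻¹‖ * ‖S k z‖ := norm_mul _ _
        _ ≤ (k:ℝ)⁻¹ * (k * r) := by
            apply mul_le_mul _ hSb (norm_nonneg _) (by positivity)
            simp
        _ = r := by field_simp
  -- the power series of Φ k on the ball of radius ε/2
  set ρ : NNReal := ⟨ε/2, le_of_lt hε2⟩ with hρdef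
  have hρ : (ρ:ℝ) = ε/2 := rfl
  have hρpos : (0:NNReal) < ρ := by exact_mod_cast hε2
  have hps : ∀ k : ℕ, HasFPowerSeriesOnBall (Φ k) (cauchyPowerSeries (Φ k) 0 ρ) 0 ρ := by
    intro k
    apply DifferentiableOn.hasFPowerSeriesOnBall _ hρpos
    intro z hz
    have hz' : z ∈ ball (0:ℂ) ε := by
      rw [mem_closedBall, dist_zero_right] at hz
      rw [mem_ball, dist_zero_right]
      exact lt_of_le_of_lt hz hε2ε
    exact ((hΦa k z hz').differentiableAt).differentiableWithinAt
  set P : ℕ → ℕ → ℂ := fun k n => (cauchyPowerSeries (Φ k) 0 ρ).coeff n with hPdef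
  -- Cauchy estimates on the coefficients
  have hPbound : ∀ k n : ℕ, ‖P k n‖ ≤ r * ((ε/2)⁻¹) ^ n := by
    intro k n
    have h1 : ‖P k n‖ = ‖cauchyPowerSeries (Φ k) 0 ρ n‖ :=
      (FormalMultilinearSeries.norm_apply_eq_norm_coef).symm
    rw [h1]
    have h2 := norm_cauchyPowerSeries_le (Φ k) 0 ρ n
    have hcirc : ∀ θ : ℝ, circleMap 0 (ρ:ℝ) θ ∈ ball (0:ℂ) ε := by
      intro θ
      rw [mem_ball, dist_zero_right, norm_circleMap_zero, hρ]
      rw [abs_of_pos hε2]; exact hε2ε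
    have hcont : Continuous fun θ : ℝ => ‖Φ k (circleMap 0 (ρ:ℝ) θ)‖ := by
      apply Continuous.norm
      apply continuous_iff_continuousAt.mpr
      intro θ
      exact ((hΦa k _ (hcirc θ)).continuousAt).comp (continuous_circleMap 0 (ρ:ℝ)).continuousAt
    have hint : (∫ θ : ℝ in (0)..2 * Real.pi, ‖Φ k (circleMap 0 (ρ:ℝ) θ)‖) ≤
        ∫ _θ : ℝ in (0)..2 * Real.pi, r := by
      apply intervalIntegral.integral_mono_on Real.two_pi_pos.le
        (hcont.intervalIntegrable _ _) (intervalIntegrable_const)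
      intro θ _
      exact hΦbound k _ (hcirc θ)
    have hint2 : (∫ _θ : ℝ in (0)..2 * Real.pi, (r:ℝ)) = 2 * Real.pi * r := by
      simp [mul_comm]
    calc ‖cauchyPowerSeries (Φ k) 0 ρ n‖
        ≤ ((2 * Real.pi)⁻¹ * ∫ θ : ℝ in (0)..2 * Real.pi, ‖Φ k (circleMap 0 (ρ:ℝ) θ)‖) *
            |(ρ:ℝ)|⁻¹ ^ n := h2
      _ ≤ ((2 * Real.pi)⁻¹ * (2 * Real.pi * r)) * |(ρ:ℝ)|⁻¹ ^ n := by
          apply mul_le_mul_of_nonneg_right _ (by positivity)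
          apply mul_le_mul_of_nonneg_left _ (by positivity)
          rw [← hint2]; exact hint
      _ = r * ((ε/2)⁻¹) ^ n := by
          rw [inv_mul_cancel_left₀ (by positivity), hρ, abs_of_pos hε2]
  -- extract a coefficientwise convergent subsequence (Montel, via Tychonoff)
  have hcpt : IsSeqCompact (Set.univ.pi fun n : ℕ => closedBall (0:ℂ) (r * ((ε/2)⁻¹) ^ n)) :=
    (isCompact_univ_pi fun n => isCompact_closedBall _ _).isSeqCompact
  have hmem : ∀ k, P k ∈ (Set.univ.pi fun n : ℕ => closedBall (0:ℂ) (r * ((ε/2)⁻¹) ^ n)) := by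
    intro k n _
    simpa [mem_closedBall, dist_zero_right] using hPbound k n
  obtain ⟨a, ha, ψ, hψ, hconv'⟩ := hcpt hmem
  have habound : ∀ n, ‖a n‖ ≤ r * ((ε/2)⁻¹) ^ n := by
    intro n
    simpa [mem_closedBall, dist_zero_right] using ha n (Set.mem_univ n)
  have hconv : ∀ n, Tendsto (fun i => P (ψ i) n) atTop (nhds (a n)) :=
    fun n => tendsto_pi_nhds.mp hconv' n
  -- the limit power series and its sum φ
  set q : FormalMultilinearSeries ℂ ℂ ℂ := FormalMultilinearSeries.ofScalars ℂ a with hqdef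
  have hqnorm : ∀ n, ‖q n‖ = ‖a n‖ := fun n => FormalMultilinearSeries.ofScalars_norm ℂ a n
  have hrad : (ρ : ENNReal) ≤ q.radius := by
    apply q.le_radius_of_bound r
    intro n
    rw [hqnorm n, hρ]
    calc ‖a n‖ * (ε/2)^n ≤ (r * ((ε/2)⁻¹) ^ n) * (ε/2)^n :=
          mul_le_mul_of_nonneg_right (habound n) (by positivity)
      _ = r := by
          rw [mul_assoc, ← mul_pow, inv_mul_cancel₀ (ne_of_gt hε2), one_pow, mul_one]
  have hradpos : (0 : ENNReal) < q.radius :=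
    lt_of_lt_of_le (by exact_mod_cast hε2 : (0:ENNReal) < (ρ:ENNReal)) hrad
  set φ : ℂ → ℂ := q.sum with hφdef
  have hqball : HasFPowerSeriesOnBall φ q 0 q.radius := q.hasFPowerSeriesOnBall hradpos
  have hφanalytic : AnalyticAt ℂ φ 0 := ⟨q, hqball.hasFPowerSeriesAt⟩
  -- sums as tsums, and pointwise convergence Φ (ψ i) → φ on the ball of radius ε/2
  have hz_ball : ∀ z : ℂ, ‖z‖ < ε/2 → z ∈ Metric.eball (0:ℂ) ρ := by
    intro z hz
    have h : ‖z‖₊ < ρ := by rw [← NNReal.coe_lt_coe, coe_nnnorm, hρ]; exact hz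
    rw [Metric.mem_eball, edist_zero_right]
    exact_mod_cast h
  have hΦsum : ∀ k : ℕ, ∀ z : ℂ, ‖z‖ < ε/2 → HasSum (fun n => P k n * z ^ n) (Φ k z) := by
    intro k z hz
    have h := (hps k).hasSum (hz_ball z hz)
    simp only [zero_add] at h
    convert h using 1
    · rfl
    funext n
    rw [FormalMultilinearSeries.apply_eq_pow_smul_coeff, smul_eq_mul, hPdef]
    ring
  have hφsum : ∀ z : ℂ, ‖z‖ < ε/2 → HasSum (fun n => a n * z ^ n) (φ z) := by
    intro z hz
    have h := hqball.hasSum (Metric.eball_subset_eball hrad (hz_ball z hz))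
    simp only [zero_add] at h
    convert h using 1
    · rfl
    funext n
    rw [hqdef, FormalMultilinearSeries.ofScalars_apply_eq, smul_eq_mul]
  have hpt : ∀ z : ℂ, ‖z‖ < ε/2 → Tendsto (fun i => Φ (ψ i) z) atTop (nhds (φ z)) := by
    intro z hz
    have hsummable : Summable (fun n : ℕ => r * (‖z‖ / (ε/2)) ^ n) := by
      apply Summable.mul_left
      exact summable_geometric_of_lt_one (by positivity) ((div_lt_one hε2).2 hz)
    have hT := tendsto_tsum_of_dominated_convergence (𝓕 := atTop)
        (f := fun i n => P (ψ i) n * z ^ n) (g := fun n => a n * z ^ n)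
        (bound := fun n => r * (‖z‖ / (ε/2)) ^ n) hsummable
        (fun n => (hconv n).mul_const _) ?_
    · rw [(hφsum z hz).tsum_eq] at hT
      exact hT.congr (fun i => (hΦsum (ψ i) z hz).tsum_eq)
    · filter_upwards with i
      intro n
      rw [norm_mul, norm_pow, div_pow]
      calc ‖P (ψ i) n‖ * ‖z‖^n ≤ (r * ((ε/2)⁻¹) ^ n) * ‖z‖^n :=
          mul_le_mul_of_nonneg_right (hPbound _ n) (by positivity)
        _ = r * (‖z‖^n / (ε/2)^n) := by
          rw [mul_assoc]; congr 1; rw [inv_pow]; field_simp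
  -- the coefficients of q
  have hqcoeff : ∀ n, q.coeff n = a n := by
    intro n
    have h := FormalMultilinearSeries.ofScalars_apply_eq (E := ℂ) a (1:ℂ) n
    rw [hqdef]
    show FormalMultilinearSeries.ofScalars ℂ a n (fun _ => 1) = a n
    rw [h, smul_eq_mul, one_pow, mul_one]
  -- a 0 = 0
  have hΦ0 : ∀ k : ℕ, Φ k 0 = 0 := by
    intro k
    simp [hΦdef, hSdef, hfix]
  have hP0 : ∀ k : ℕ, P k 0 = Φ k 0 := by
    intro k
    exact (hps k).hasFPowerSeriesAt.coeff_zero 1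
  have ha0 : a 0 = 0 := by
    have h : Tendsto (fun i => P (ψ i) 0) atTop (nhds (0:ℂ)) := by
      have heq : (fun i => P (ψ i) 0) = fun _ => (0:ℂ) := by
        funext i; rw [hP0, hΦ0]
      rw [heq]; exact tendsto_const_nhds
    exact tendsto_nhds_unique (hconv 0) h
  -- derivative computations : a 1 = 1
  have hderiter : ∀ j : ℕ, deriv (f^[j]) 0 = lam ^ j := by
    intro j
    induction j with
    | zero => simp
    | succ j ih =>
      rw [Function.iterate_succ']
      rw [deriv_comp 0 ?_ ?_]
      · rw [hfix j, hder, ih, pow_succ, mul_comm]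
      · rw [hfix j]; exact (hf 0 h0r).differentiableAt
      · exact (hiter j 0 h0ε).differentiableAt
  have hΦderiv : ∀ k : ℕ, deriv (Φ k) 0 = (k:ℂ)⁻¹ * k := by
    intro k
    have hdiffj : ∀ j ∈ Finset.range k, DifferentiableAt ℂ (fun z => (lam ^ j)⁻¹ * f^[j] z) 0 :=
      fun j _ => (analyticAt_const.mul (hiter j 0 h0ε)).differentiableAt
    rw [hΦdef]
    simp only [hSdef]
    rw [deriv_const_mul _ (DifferentiableAt.fun_sum hdiffj)]
    congr 1
    rw [deriv_fun_sum hdiffj]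
    have h : ∀ j ∈ Finset.range k, deriv (fun z => (lam ^ j)⁻¹ * f^[j] z) 0 = 1 := by
      intro j _
      rw [deriv_const_mul _ (hiter j 0 h0ε).differentiableAt, hderiter j,
        inv_mul_cancel₀ (pow_ne_zero j hlam0)]
    rw [Finset.sum_congr rfl h]
    simp
  have hP1 : ∀ k : ℕ, P k 1 = deriv (Φ k) 0 := by
    intro k
    have h := (hps k).hasFPowerSeriesAt.deriv
    rw [h]
    rfl
  have ha1 : a 1 = 1 := by
    have hev : ∀ᶠ i in atTop, P (ψ i) 1 = 1 := by
      filter_upwards [eventually_ge_atTop 1] with i hi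
      have hψi : 1 ≤ ψ i := le_trans hi hψ.le_apply
      rw [hP1 (ψ i), hΦderiv (ψ i)]
      rw [inv_mul_cancel₀]
      exact Nat.cast_ne_zero.mpr (by omega)
    have h : Tendsto (fun i => P (ψ i) 1) atTop (nhds (1:ℂ)) :=
      Tendsto.congr' (Filter.EventuallyEq.symm hev) tendsto_const_nhds
    exact tendsto_nhds_unique (hconv 1) h
  -- conclude the three pointwise properties of φ
  have hφ0 : φ 0 = 0 := by
    have h := hqball.hasFPowerSeriesAt.coeff_zero 1
    rw [show q 0 1 = q.coeff 0 from rfl, hqcoeff 0, ha0] at h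
    exact h.symm
  have hφderiv : deriv φ 0 = 1 := by
    have h := hqball.hasFPowerSeriesAt.deriv
    rw [h, show (q 1 fun _ => 1) = q.coeff 1 from rfl, hqcoeff 1, ha1]
  -- the functional equation near 0
  have hfcont : ContinuousAt f 0 := (hf 0 h0r).continuousAt
  obtain ⟨δ, hδpos, hδ⟩ := Metric.continuousAt_iff.mp hfcont (ε/2) hε2
  have hfe : ∀ z : ℂ, ‖z‖ < ε/2 → ‖f z‖ < ε/2 → φ (f z) = lam * φ z := by
    intro z hz hfz
    have hzε : z ∈ ball (0:ℂ) ε := by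
      rw [mem_ball, dist_zero_right]; exact lt_trans hz hε2ε
    have hkey : ∀ k : ℕ, Φ k (f z) =
        lam * Φ k z + lam * (k:ℂ)⁻¹ * ((lam ^ k)⁻¹ * f^[k] z - z) := by
      intro k
      have hSid : S k (f z) = lam * (S k z + (lam ^ k)⁻¹ * f^[k] z - z) := by
        have h1 : S k (f z) = ∑ j ∈ Finset.range k, lam * ((lam ^ (j+1))⁻¹ * f^[j+1] z) := by
          rw [hSdef]
          apply Finset.sum_congr rfl
          intro j _
          rw [Function.iterate_succ_apply, pow_succ, mul_inv]
          field_simp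
        have h2 : ∑ j ∈ Finset.range k, ((lam ^ (j+1))⁻¹ * f^[j+1] z)
            = S k z + (lam ^ k)⁻¹ * f^[k] z - z := by
          have h3 := Finset.sum_range_succ' (fun j => (lam ^ j)⁻¹ * f^[j] z) k
          have h4 := Finset.sum_range_succ (fun j => (lam ^ j)⁻¹ * f^[j] z) k
          rw [hSdef]
          simp only [pow_zero, inv_one, one_mul, Function.iterate_zero, id_eq] at h3
          rw [h4] at h3
          linear_combination -h3
        rw [h1, ← Finset.mul_sum, h2]
      rw [hΦdef]
      simp only
      rw [hSid]
      ring
    have hE : Tendsto (fun i => lam * ((ψ i:ℕ):ℂ)⁻¹ * ((lam ^ (ψ i))⁻¹ * f^[ψ i] z - z))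
        atTop (nhds 0) := by
      rw [tendsto_zero_iff_norm_tendsto_zero]
      apply squeeze_zero (fun i => norm_nonneg _) (g := fun i => ((ψ i : ℝ))⁻¹ * (r + ‖z‖))
      · intro i
        rw [norm_mul, norm_mul, hlam, one_mul]
        apply mul_le_mul
        · simp
        · calc ‖(lam ^ (ψ i))⁻¹ * f^[ψ i] z - z‖ ≤ ‖(lam ^ (ψ i))⁻¹ * f^[ψ i] z‖ + ‖z‖ :=
              norm_sub_le _ _
            _ ≤ r + ‖z‖ := by
              apply add_le_add_left
              rw [norm_mul, norm_inv, norm_pow, hlam, one_pow, inv_one, one_mul]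
              exact le_of_lt (by simpa [mem_ball, dist_zero_right] using horb z hzε (ψ i))
        · exact norm_nonneg _
        · positivity
      · have h5 : Tendsto (fun i => ((ψ i : ℝ))) atTop atTop :=
          tendsto_natCast_atTop_atTop.comp hψ.tendsto_atTop
        have := h5.inv_tendsto_atTop.mul_const (r + ‖z‖)
        simpa using this
    have hleft : Tendsto (fun i => Φ (ψ i) (f z)) atTop (nhds (φ (f z))) := hpt _ hfz
    have hright : Tendsto (fun i => Φ (ψ i) (f z)) atTop (nhds (lam * φ z + 0)) := by
      have h6 := ((hpt z hz).const_mul lam).add hE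
      apply h6.congr
      intro i
      exact (hkey (ψ i)).symm
    have h7 := tendsto_nhds_unique hleft hright
    rw [h7, add_zero]
  refine ⟨φ, hφanalytic, hφ0, by rw [hφderiv]; exact one_ne_zero, ?_⟩
  have hmem2 : ball (0:ℂ) (min δ (ε/2)) ∈ nhds (0:ℂ) :=
    ball_mem_nhds 0 (lt_min hδpos hε2)
  filter_upwards [hmem2] with z hzball
  rw [mem_ball, dist_zero_right, lt_min_iff] at hzball
  apply hfe z hzball.2
  have := hδ (by rw [dist_zero_right]; exact hzball.1)
  rwa [hf0, dist_zero_right] at this
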